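/- Let G be a finite d-regular graph on v(G) vertices and t ≥ 0. Define p(G,t) = 2t·M'(G,t)/(v(G)·M(G,t)). Then p(G,t) ≤ d·t/(1+t). -/

import Mathlib

open scoped Classical
open Finset

/-- Number of matchings with exactly `k` edges in `G`. -/
noncomputable def numMatchings {V : Type*} [Fintype V] (G : SimpleGraph V) (k : ℕ) : ℕ :=
  (G.edgeFinset.powerset.filter (fun M => M.card = k ∧
    ∀ e ∈ M, ∀ f ∈ M, e ≠ f → ∀ v : V, ¬(v ∈ e ∧ v ∈ f))).card

/-- Matching generating function `M(G,t) = Σ_k m_k(G) t^k`. -/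
noncomputable def matchGen {V : Type*} [Fintype V] (G : SimpleGraph V) (t : ℝ) : ℝ :=
  ∑ k ∈ Finset.range (Fintype.card V + 1), (numMatchings G k : ℝ) * t ^ k

/-- Derivative `M'(G,t) = Σ_k k·m_k(G) t^(k-1)`. -/
noncomputable def matchGenDeriv {V : Type*} [Fintype V] (G : SimpleGraph V) (t : ℝ) : ℝ :=
  ∑ k ∈ Finset.range (Fintype.card V + 1), (k : ℝ) * (numMatchings G k : ℝ) * t ^ (k - 1)

/-- The graph obtained from `G` by deleting all vertices in `S` (kept as isolated
vertices, which does not affect matchings). -/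
def deleteVerts {V : Type*} (G : SimpleGraph V) (S : Set V) : SimpleGraph V where
  Adj a b := G.Adj a b ∧ a ∉ S ∧ b ∉ S
  symm := ⟨fun _ _ h => ⟨h.1.symm, h.2.2, h.2.1⟩⟩
  loopless := ⟨fun a h => G.irrefl h.1⟩



noncomputable def matchings {V : Type*} [Fintype V] (G : SimpleGraph V) :
    Finset (Finset (Sym2 V)) :=
  G.edgeFinset.powerset.filter (fun M =>
    ∀ e ∈ M, ∀ f ∈ M, e ≠ f → ∀ v : V, ¬(v ∈ e ∧ v ∈ f))

lemma mem_matchings {V : Type*} [Fintype V] {G : SimpleGraph V} {M : Finset (Sym2 V)} :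
    M ∈ matchings G ↔ M ⊆ G.edgeFinset ∧
      ∀ e ∈ M, ∀ f ∈ M, e ≠ f → ∀ v : V, ¬(v ∈ e ∧ v ∈ f) := by
  simp [matchings]

lemma matchings_subset {V : Type*} [Fintype V] {G : SimpleGraph V}
    {M M' : Finset (Sym2 V)} (hM : M ∈ matchings G) (h : M' ⊆ M) : M' ∈ matchings G := by
  rw [mem_matchings] at hM ⊢
  exact ⟨h.trans hM.1, fun e he f hf => hM.2 e (h he) f (h hf)⟩

lemma matchings_card_le {V : Type*} [Fintype V] {G : SimpleGraph V}
    {M : Finset (Sym2 V)} (hM : M ∈ matchings G) : M.card ≤ Fintype.card V := by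
  rw [mem_matchings] at hM
  have : Set.InjOn (fun e : Sym2 V => e.out.1) M := by
    intro e he f hf hef
    by_contra hne
    simp only at hef
    exact hM.2 e he f hf hne e.out.1 ⟨Sym2.out_fst_mem e, hef ▸ Sym2.out_fst_mem f⟩
  calc M.card ≤ (Finset.univ : Finset V).card :=
        Finset.card_le_card_of_injOn _ (fun _ _ => Finset.mem_univ _) this
    _ = Fintype.card V := Finset.card_univ

lemma numMatchings_eq {V : Type*} [Fintype V] (G : SimpleGraph V) (k : ℕ) :
    numMatchings G k = ((matchings G).filter (fun M => M.card = k)).card := by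
  rw [numMatchings, matchings, Finset.filter_filter]
  congr 1
  apply Finset.filter_congr
  intro M _
  tauto

lemma matchings_maps_to {V : Type*} [Fintype V] (G : SimpleGraph V) :
    ∀ M ∈ matchings G, M.card ∈ Finset.range (Fintype.card V + 1) := by
  intro M hM
  rw [Finset.mem_range, Nat.lt_succ_iff]
  exact matchings_card_le hM

lemma matchGen_eq {V : Type*} [Fintype V] (G : SimpleGraph V) (t : ℝ) :
    matchGen G t = ∑ M ∈ matchings G, t ^ M.card := by
  rw [matchGen, ← Finset.sum_fiberwise_of_maps_to (matchings_maps_to G)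
    (fun M => t ^ M.card)]
  refine Finset.sum_congr rfl fun k _ => ?_
  rw [numMatchings_eq, Finset.sum_congr rfl (fun M hM => by
    rw [(Finset.mem_filter.1 hM).2]), Finset.sum_const, nsmul_eq_mul]

lemma matchGenDeriv_eq {V : Type*} [Fintype V] (G : SimpleGraph V) (t : ℝ) :
    t * matchGenDeriv G t = ∑ M ∈ matchings G, (M.card : ℝ) * t ^ M.card := by
  rw [matchGenDeriv, Finset.mul_sum,
    ← Finset.sum_fiberwise_of_maps_to (matchings_maps_to G)
      (fun M => (M.card : ℝ) * t ^ M.card)]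
  refine Finset.sum_congr rfl fun k _ => ?_
  rw [numMatchings_eq, Finset.sum_congr rfl (fun M hM => by
    rw [(Finset.mem_filter.1 hM).2]), Finset.sum_const, nsmul_eq_mul]
  rcases Nat.eq_zero_or_pos k with rfl | hk
  · simp
  · rw [← Nat.succ_pred_eq_of_pos hk]
    push_cast
    ring_nf
    rw [pow_succ]
    ring

lemma sym2_eq_out {V : Type*} (e : Sym2 V) : e = s(e.out.1, e.out.2) := by
  rw [Sym2.mk, Prod.mk.eta, e.out_eq]

lemma card_covered {V : Type*} [Fintype V] {G : SimpleGraph V}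
    {M : Finset (Sym2 V)} (hM : M ∈ matchings G) :
    (Finset.univ.filter (fun v : V => ∃ e ∈ M, v ∈ e)).card = 2 * M.card := by
  rw [mem_matchings] at hM
  have hset : Finset.univ.filter (fun v : V => ∃ e ∈ M, v ∈ e)
      = M.biUnion (fun e => {e.out.1, e.out.2}) := by
    ext v
    simp only [Finset.mem_filter, Finset.mem_univ, true_and, Finset.mem_biUnion,
      Finset.mem_insert, Finset.mem_singleton]
    constructor
    · rintro ⟨e, he, hv⟩
      refine ⟨e, he, ?_⟩
      rw [sym2_eq_out e, Sym2.mem_iff] at hv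
      exact hv
    · rintro ⟨e, he, hv⟩
      refine ⟨e, he, ?_⟩
      rw [sym2_eq_out e, Sym2.mem_iff]
      exact hv
  rw [hset, Finset.card_biUnion, Finset.sum_congr rfl (fun e he => ?_), Finset.sum_const,
    smul_eq_mul, Nat.mul_comm]
  · have hne : e.out.1 ≠ e.out.2 := by
      intro h
      have hd : ¬ e.IsDiag := G.not_isDiag_of_mem_edgeSet
        (SimpleGraph.mem_edgeFinset.1 (hM.1 he))
      apply hd
      rw [sym2_eq_out e, Sym2.mk_isDiag_iff]
      exact h
    rw [Finset.card_insert_of_notMem (by simpa using hne), Finset.card_singleton]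
  · intro e he f hf hef
    simp only [Finset.disjoint_left, Finset.mem_insert, Finset.mem_singleton]
    rintro v hv hv'
    have h1 : v ∈ e := by rw [sym2_eq_out e, Sym2.mem_iff]; exact hv
    have h2 : v ∈ f := by rw [sym2_eq_out f, Sym2.mem_iff]; exact hv'
    exact hM.2 e he f hf hef v ⟨h1, h2⟩

/-- `C v` : sum over matchings covering `v`. -/
noncomputable def coverSum {V : Type*} [Fintype V] (G : SimpleGraph V) (t : ℝ) (v : V) : ℝ :=
  ∑ M ∈ (matchings G).filter (fun M => ∃ e ∈ M, v ∈ e), t ^ M.card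

lemma double_count {V : Type*} [Fintype V] (G : SimpleGraph V) (t : ℝ) :
    ∑ v : V, coverSum G t v = ∑ M ∈ matchings G, (2 * M.card : ℝ) * t ^ M.card := by
  have : ∀ v : V, coverSum G t v = ∑ M ∈ matchings G,
      (if ∃ e ∈ M, v ∈ e then t ^ M.card else 0) := by
    intro v
    rw [coverSum, Finset.sum_filter]
  rw [Finset.sum_congr rfl (fun v _ => this v), Finset.sum_comm]
  refine Finset.sum_congr rfl fun M hM => ?_
  rw [← Finset.sum_filter, Finset.sum_const, card_covered hM, nsmul_eq_mul]
  push_cast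
  ring

noncomputable def uncovSum {V : Type*} [Fintype V] (G : SimpleGraph V) (t : ℝ) (v : V) : ℝ :=
  ∑ M ∈ (matchings G).filter (fun M => ¬ ∃ e ∈ M, v ∈ e), t ^ M.card

lemma split_Z {V : Type*} [Fintype V] (G : SimpleGraph V) (t : ℝ) (v : V) :
    coverSum G t v + uncovSum G t v = ∑ M ∈ matchings G, t ^ M.card := by
  rw [coverSum, uncovSum]
  exact Finset.sum_filter_add_sum_filter_not _ _ _


lemma edgeSum_le {V : Type*} [Fintype V] {G : SimpleGraph V} {t : ℝ} (ht : 0 ≤ t)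
    {v : V} {e : Sym2 V} (hv : v ∈ e) :
    ∑ M ∈ (matchings G).filter (fun M => e ∈ M), t ^ M.card ≤ t * uncovSum G t v := by
  have key : ∀ M ∈ (matchings G).filter (fun M => e ∈ M),
      t ^ M.card = t * t ^ (M.erase e).card := by
    intro M hM
    obtain ⟨hM1, hM2⟩ := Finset.mem_filter.1 hM
    rw [Finset.card_erase_of_mem hM2, ← pow_succ',
      Nat.sub_add_cancel (Finset.card_pos.2 ⟨e, hM2⟩)]
  rw [Finset.sum_congr rfl key, ← Finset.mul_sum]
  refine mul_le_mul_of_nonneg_left ?_ ht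
  have hinj : Set.InjOn (fun M : Finset (Sym2 V) => M.erase e)
      ((matchings G).filter (fun M => e ∈ M)) := by
    intro M hM N hN h
    simp only at h
    obtain ⟨_, hMe⟩ := Finset.mem_filter.1 hM
    obtain ⟨_, hNe⟩ := Finset.mem_filter.1 hN
    rw [← Finset.insert_erase hMe, ← Finset.insert_erase hNe, h]
  have himg : ∑ M ∈ (matchings G).filter (fun M => e ∈ M), t ^ (M.erase e).card
      = ∑ M' ∈ ((matchings G).filter (fun M => e ∈ M)).image (fun M => M.erase e),
          t ^ M'.card :=
    (Finset.sum_image (g := fun M : Finset (Sym2 V) => M.erase e) (f := fun M' => t ^ M'.card) (fun x hx y hy h => hinj hx hy h)).symm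
  rw [himg, uncovSum]
  refine Finset.sum_le_sum_of_subset_of_nonneg ?_ (fun M _ _ => pow_nonneg ht _)
  intro M' hM'
  obtain ⟨M, hM, rfl⟩ := Finset.mem_image.1 hM'
  obtain ⟨hM1, hMe⟩ := Finset.mem_filter.1 hM
  refine Finset.mem_filter.2 ⟨matchings_subset hM1 (Finset.erase_subset _ _), ?_⟩
  rintro ⟨f, hf, hvf⟩
  obtain ⟨hfM, hfe⟩ : f ∈ M ∧ f ≠ e := by
    have := Finset.mem_erase.1 hf; exact ⟨this.2, this.1⟩
  exact (mem_matchings.1 hM1).2 f hfM e hMe hfe v ⟨hvf, hv⟩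

lemma coverSum_le {V : Type*} [Fintype V] {G : SimpleGraph V} {d : ℕ}
    (hreg : G.IsRegularOfDegree d) {t : ℝ} (ht : 0 ≤ t) (v : V) :
    coverSum G t v ≤ d * (t * uncovSum G t v) := by
  classical
  have hpart : (matchings G).filter (fun M => ∃ e ∈ M, v ∈ e)
      = (G.incidenceFinset v).biUnion
        (fun e => (matchings G).filter (fun M => e ∈ M)) := by
    ext M
    simp only [Finset.mem_filter, Finset.mem_biUnion, SimpleGraph.mem_incidenceFinset]
    constructor
    · rintro ⟨hM, e, he, hv⟩
      refine ⟨e, ⟨SimpleGraph.mem_edgeFinset.1 ((mem_matchings.1 hM).1 he), hv⟩, hM, he⟩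
    · rintro ⟨e, ⟨_, hv⟩, hM, he⟩
      exact ⟨hM, e, he, hv⟩
  have hdisj : ∀ e ∈ G.incidenceFinset v, ∀ f ∈ G.incidenceFinset v, e ≠ f →
      Disjoint ((matchings G).filter (fun M => e ∈ M))
        ((matchings G).filter (fun M => f ∈ M)) := by
    intro e he f hf hef
    rw [Finset.disjoint_left]
    rintro M hMe hMf
    obtain ⟨hM, heM⟩ := Finset.mem_filter.1 hMe
    obtain ⟨_, hfM⟩ := Finset.mem_filter.1 hMf
    exact (mem_matchings.1 hM).2 e heM f hfM hef v
      ⟨(G.mem_incidenceFinset v e).1 he |>.2,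
       (G.mem_incidenceFinset v f).1 hf |>.2⟩
  rw [coverSum, hpart, Finset.sum_biUnion hdisj]
  calc ∑ e ∈ G.incidenceFinset v, ∑ M ∈ (matchings G).filter (fun M => e ∈ M), t ^ M.card
      ≤ ∑ e ∈ G.incidenceFinset v, t * uncovSum G t v := by
        refine Finset.sum_le_sum fun e he => ?_
        exact edgeSum_le ht ((G.mem_incidenceFinset v e).1 he).2
    _ = d * (t * uncovSum G t v) := by
        rw [Finset.sum_const, SimpleGraph.card_incidenceFinset_eq_degree, hreg v,
          nsmul_eq_mul]

lemma pervertex {V : Type*} [Fintype V] {G : SimpleGraph V} {d : ℕ}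
    (hreg : G.IsRegularOfDegree d) {t : ℝ} (ht : 0 ≤ t) (v : V) :
    (1 + t) * coverSum G t v ≤ d * t * ∑ M ∈ matchings G, t ^ M.card := by
  have h1 := coverSum_le hreg ht v
  have hC0 : 0 ≤ coverSum G t v :=
    Finset.sum_nonneg fun M _ => pow_nonneg ht _
  have hU0 : 0 ≤ uncovSum G t v :=
    Finset.sum_nonneg fun M _ => pow_nonneg ht _
  have hsplit := split_Z G t v
  rw [← hsplit]
  rcases Nat.eq_zero_or_pos d with rfl | hd
  · simp only [Nat.cast_zero, zero_mul] at h1 ⊢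
    have : coverSum G t v = 0 := le_antisymm h1 hC0
    rw [this, mul_zero]
  · have hd1 : (1 : ℝ) ≤ d := by exact_mod_cast hd
    nlinarith [mul_nonneg ht hC0, mul_nonneg (mul_nonneg ht hC0) (sub_nonneg.2 hd1),
      mul_nonneg ht hU0]

theorem stmt5 {V : Type*} [Fintype V] (G : SimpleGraph V) (d : ℕ)
    (hreg : G.IsRegularOfDegree d) (t : ℝ) (ht : 0 ≤ t) :
    2 * t * matchGenDeriv G t / ((Fintype.card V : ℝ) * matchGen G t) ≤ d * t / (1 + t) := by
  have h1t : (0 : ℝ) < 1 + t := by linarith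
  have hRHS : 0 ≤ (d : ℝ) * t / (1 + t) :=
    div_nonneg (mul_nonneg (Nat.cast_nonneg d) ht) h1t.le
  rcases Nat.eq_zero_or_pos (Fintype.card V) with hcard | hcard
  · have : matchGenDeriv G t = 0 := by
      rw [matchGenDeriv, hcard]
      simp
    rw [this, mul_zero, zero_div]
    exact hRHS
  · have hZ1 : (1 : ℝ) ≤ ∑ M ∈ matchings G, t ^ M.card := by
      have hmem : (∅ : Finset (Sym2 V)) ∈ matchings G :=
        mem_matchings.2 ⟨Finset.empty_subset _, by simp⟩
      have := Finset.single_le_sum (f := fun M : Finset (Sym2 V) => t ^ M.card)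
        (fun M _ => pow_nonneg ht _) hmem
      simpa using this
    have hZ0 : (0 : ℝ) < ∑ M ∈ matchings G, t ^ M.card := lt_of_lt_of_le one_pos hZ1
    have hden : (0 : ℝ) < (Fintype.card V : ℝ) * matchGen G t := by
      rw [matchGen_eq]
      exact mul_pos (by exact_mod_cast hcard) hZ0
    rw [div_le_div_iff₀ hden h1t]
    have hsum : ∑ v : V, coverSum G t v = 2 * (t * matchGenDeriv G t) := by
      rw [double_count, matchGenDeriv_eq, Finset.mul_sum]
      refine Finset.sum_congr rfl fun M _ => by push_cast; ring
    have hmain : ∑ v : V, (1 + t) * coverSum G t v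
        ≤ ∑ _v : V, (d : ℝ) * t * ∑ M ∈ matchings G, t ^ M.card :=
      Finset.sum_le_sum fun v _ => pervertex hreg ht v
    rw [← Finset.mul_sum, hsum, Finset.sum_const, Finset.card_univ, nsmul_eq_mul] at hmain
    rw [matchGen_eq]
    nlinarith [hmain]
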